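/- For ρ > 1 and α ∈ (0,1)∪(1,∞), the limit c_α^{(∞)}(ρ) := lim_{n→∞} c_α^{(n)}(ρ) exists and admits the closed form c_α^{(∞)}(ρ) = (1/(α−1))·log(1 + (1 + α(ρ−1) − ρ^α)/((1−α)(ρ−1))) − (α/(α−1))·log(1 + (1 + α(ρ−1) − ρ^α)/((1−α)(ρ^α−1))). -/

import Mathlib

open Finset

/-- `P` is a probability mass function, strictly positive on `{1,…,n}`. -/
def IsPMF (n : ℕ) (P : ℕ → ℝ) : Prop :=
  (∀ i ∈ Finset.Icc 1 n, 0 < P i) ∧ ∑ i ∈ Finset.Icc 1 n, P i = 1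

/-- The ratio of the maximal to minimal mass of `P` on `{1,…,n}` is at most `ρ`. -/
def RatioBdd (n : ℕ) (ρ : ℝ) (P : ℕ → ℝ) : Prop :=
  ∀ i ∈ Finset.Icc 1 n, ∀ j ∈ Finset.Icc 1 n, P i ≤ ρ * P j

/-- `P` is nonincreasing on `{1,…,n}`. -/
def DecOn (n : ℕ) (P : ℕ → ℝ) : Prop :=
  ∀ i ∈ Finset.Icc 1 n, ∀ j ∈ Finset.Icc 1 n, i ≤ j → P j ≤ P i

/-- Sum of the `k` largest masses of `P` on `{1,…,n}`. -/
noncomputable def topSum (n : ℕ) (P : ℕ → ℝ) (k : ℕ) : ℝ :=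
  sSup ((fun s : Finset ℕ => ∑ i ∈ s, P i) '' {s | s ⊆ Finset.Icc 1 n ∧ s.card = k})

/-- `P ≺ Q`: `P` is majorized by `Q`, both viewed on `{1,…,n}`. -/
def MajorizedBy (n : ℕ) (P Q : ℕ → ℝ) : Prop :=
  ∀ k, 1 ≤ k → k ≤ n - 1 → topSum n P k ≤ topSum n Q k

/-- Zero-padding of a pmf on `{1,…,m}` outside of `{1,…,m}`. -/
def padTo (m : ℕ) (Q : ℕ → ℝ) : ℕ → ℝ := fun i => if i ≤ m then Q i else 0

/-- Rényi entropy of order `α` of `P` on `{1,…,n}` (Shannon entropy for `α = 1`);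
natural logarithms. -/
noncomputable def renyiH (n : ℕ) (α : ℝ) (P : ℕ → ℝ) : ℝ :=
  if α = 1 then -∑ i ∈ Finset.Icc 1 n, P i * Real.log (P i)
  else (1 - α)⁻¹ * Real.log (∑ i ∈ Finset.Icc 1 n, P i ^ α)

/-- `c_α^{(n)}(ρ) = log n − min_{P ∈ 𝒫_n(ρ)} H_α(P)` for `n ≥ 2`, and `0` for `n ≤ 1`. -/
noncomputable def cN (α ρ : ℝ) (n : ℕ) : ℝ :=
  if n ≤ 1 then 0
  else Real.log n - sInf (renyiH n α '' {P | IsPMF n P ∧ RatioBdd n ρ P})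

/-- The closed-form expression for `c_α^{(∞)}(ρ)`, `α ∈ (0,1) ∪ (1,∞)`. -/
noncomputable def cInfinity (α ρ : ℝ) : ℝ :=
  (α - 1)⁻¹ * Real.log (1 + (1 + α * (ρ - 1) - ρ ^ α) / ((1 - α) * (ρ - 1)))
    - α / (α - 1) * Real.log (1 + (1 + α * (ρ - 1) - ρ ^ α) / ((1 - α) * (ρ ^ α - 1)))

/-- `v(α) := c_α^{(∞)}(2)`, with the continuous extension at `α = 1`. -/
noncomputable def vFun (α : ℝ) : ℝ :=
  if α = 1 then Real.log (2 / (Real.exp 1 * Real.log 2))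
  else Real.log ((α - 1) / ((2 : ℝ) ^ α - 2)) - α / (α - 1) * Real.log (α / ((2 : ℝ) ^ α - 1))

/-- `n*`: the maximal `i ∈ {1,…,m−1}` with `P i ≥ (m−i)⁻¹ ∑_{j=i+1}^n P j`. -/
noncomputable def nStar (n m : ℕ) (P : ℕ → ℝ) : ℕ :=
  sSup {i : ℕ | 1 ≤ i ∧ i ≤ m - 1 ∧
    ((m : ℝ) - (i : ℝ))⁻¹ * ∑ j ∈ Finset.Icc (i + 1) n, P j ≤ P i}

/-- The pmf of `X̃_m` on `{1,…,m}`, built from a nonincreasing pmf `P` on `{1,…,n}`. -/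
noncomputable def tildeX (n m : ℕ) (P : ℕ → ℝ) : ℕ → ℝ := fun i =>
  if P 1 < 1 / (m : ℝ) then 1 / (m : ℝ)
  else if i ≤ nStar n m P then P i
  else ((m : ℝ) - (nStar n m P : ℝ))⁻¹ * ∑ j ∈ Finset.Icc (nStar n m P + 1) n, P j

/-- The pmf of `Ỹ_m` on `{1,…,m}`. -/
def tildeY (n m : ℕ) (P : ℕ → ℝ) : ℕ → ℝ := fun i =>
  if i = 1 then ∑ j ∈ Finset.Icc 1 (n - m + 1), P j else P (n - m + i)

/-- The pmf of `f(X)`: `(push n f P) j = ∑_{i ∈ {1,…,n}, f i = j} P i`. -/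
def push (n : ℕ) (f : ℕ → ℕ) (P : ℕ → ℝ) : ℕ → ℝ := fun j =>
  ∑ i ∈ (Finset.Icc 1 n).filter (fun i => f i = j), P i

/-- The set `{1,…,n}^k` of source sequences of length `k`. -/
def seqSet (n k : ℕ) : Finset (Fin k → ℕ) := Fintype.piFinset fun _ => Finset.Icc 1 n

/-- Product (i.i.d.) probability of a sequence. -/
def prodP (k : ℕ) (P : ℕ → ℝ) (x : Fin k → ℕ) : ℝ := ∏ i, P (x i)

/-- `g` is a ranking function for the i.i.d. vector on `{1,…,n}^k` with marginal `P`: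
a bijection onto `{1,…,n^k}` which assigns smaller ranks to larger masses. -/
def IsRanking (n k : ℕ) (P : ℕ → ℝ) (g : (Fin k → ℕ) → ℕ) : Prop :=
  Set.BijOn g (↑(seqSet n k)) (Set.Icc 1 (n ^ k)) ∧
    ∀ x ∈ seqSet n k, ∀ y ∈ seqSet n k, prodP k P y < prodP k P x → g x < g y

/-- The `ρ`-th guessing moment `E[g(Z^k)^ρ]`. -/
noncomputable def gmoment (n k : ℕ) (P : ℕ → ℝ) (g : (Fin k → ℕ) → ℕ) (ρ : ℝ) : ℝ :=
  ∑ x ∈ seqSet n k, prodP k P x * (g x : ℝ) ^ ρ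

/-- Kraft inequality for a `D`-ary length function on `{1,…,n}^k`. -/
def Kraft (n k D : ℕ) (ℓ : (Fin k → ℕ) → ℕ) : Prop :=
  ∑ x ∈ seqSet n k, (D : ℝ) ^ (-(ℓ x : ℝ)) ≤ 1

/-- Scaled cumulant generating function `Λ_k(ρ)` of the codeword lengths (base-`D` log). -/
noncomputable def cgf (n k D : ℕ) (P : ℕ → ℝ) (ℓ : (Fin k → ℕ) → ℕ) (ρ : ℝ) : ℝ :=
  (1 / (k : ℝ)) * Real.logb D (∑ x ∈ seqSet n k, prodP k P x * (D : ℝ) ^ (ρ * (ℓ x : ℝ)))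

/-- `i_β` of Lemma 2. -/
noncomputable def iBeta (n : ℕ) (ρ β : ℝ) : ℕ := Nat.floor ((1 - (n : ℝ) * β) / ((ρ - 1) * β))

/-- The pmf `Q_β` of Lemma 2. -/
noncomputable def Qbeta (n : ℕ) (ρ β : ℝ) : ℕ → ℝ := fun j =>
  if j ≤ iBeta n ρ β then ρ * β
  else if j = iBeta n ρ β + 1 then
    1 - ((n : ℝ) + (iBeta n ρ β : ℝ) * ρ - (iBeta n ρ β : ℝ) - 1) * β
  else β


section Stmt3Aux

/-! Auxiliary machinery for `stmt3`. -/

noncomputable def gfun (α a b : ℝ) : ℝ → ℝ := fun t =>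
  (α - 1)⁻¹ * Real.log (1 + a * t) - α / (α - 1) * Real.log (1 + b * t)

variable {ρ α a b θ t : ℝ}

lemma stmt3_amgm_sub1 (hρ : 1 < ρ) (hα : 0 < α) (hα1 : α < 1) :
    ρ ^ α ≤ α * ρ + (1 - α) := by
  have h := Real.geom_mean_le_arith_mean2_weighted (w₁ := α) (w₂ := 1-α) (p₁ := ρ) (p₂ := 1)
    hα.le (by linarith) (by positivity) zero_le_one (by ring)
  simpa using h

lemma stmt3_amgm_sub2 (hρ : 1 < ρ) (hα1 : 1 < α) :
    α * ρ ≤ ρ ^ α + (α - 1) := by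
  have hα : 0 < α := by linarith
  have h := Real.geom_mean_le_arith_mean2_weighted (w₁ := 1/α) (w₂ := 1-1/α)
    (p₁ := ρ ^ α) (p₂ := 1)
    (by positivity) (by rw [sub_nonneg]; exact (div_le_one hα).mpr hα1.le)
    (by positivity) zero_le_one (by ring)
  rw [Real.one_rpow, mul_one, ← Real.rpow_mul (by positivity : (0:ℝ) ≤ ρ), mul_one_div,
    div_self hα.ne', Real.rpow_one] at h
  have h2 := mul_le_mul_of_nonneg_left h hα.le
  have e : α * (1/α * ρ^α + (1 - 1/α)) = ρ ^ α + (α - 1) := by field_simp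
  linarith [h2, e.le]

lemma stmt3_amgm_psi1 (hρ : 1 < ρ) (hα : 0 < α) (hα1 : α < 1) :
    ρ ≤ α * ρ ^ α + (1 - α) * (ρ * ρ ^ α) := by
  have hρ0 : (0:ℝ) < ρ := by linarith
  have h := Real.geom_mean_le_arith_mean2_weighted (w₁ := α) (w₂ := 1-α)
    (p₁ := ρ ^ α) (p₂ := ρ * ρ ^ α)
    hα.le (by linarith) (by positivity) (by positivity) (by ring)
  have e : (ρ ^ α) ^ α * (ρ * ρ ^ α) ^ (1-α) = ρ := by
    rw [show ρ * ρ ^ α = ρ ^ (1 + α) by rw [Real.rpow_add hρ0, Real.rpow_one],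
      ← Real.rpow_mul hρ0.le, ← Real.rpow_mul hρ0.le, ← Real.rpow_add hρ0]
    norm_num [show α * α + (1+α)*(1-α) = 1 by ring]
  linarith [e ▸ h]

lemma stmt3_amgm_psi2 (hρ : 1 < ρ) (hα1 : 1 < α) :
    α * ρ ^ α ≤ ρ + (α - 1) * (ρ * ρ ^ α) := by
  have hα : 0 < α := by linarith
  have hρ0 : (0:ℝ) < ρ := by linarith
  have h := Real.geom_mean_le_arith_mean2_weighted (w₁ := 1/α) (w₂ := 1-1/α)
    (p₁ := ρ) (p₂ := ρ * ρ ^ α)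
    (by positivity) (by rw [sub_nonneg]; exact (div_le_one hα).mpr hα1.le)
    hρ0.le (by positivity) (by ring)
  have e : ρ ^ (1/α : ℝ) * (ρ * ρ ^ α) ^ (1-1/α) = ρ ^ α := by
    rw [show ρ * ρ ^ α = ρ ^ (1 + α) by rw [Real.rpow_add hρ0, Real.rpow_one],
      ← Real.rpow_mul hρ0.le, ← Real.rpow_add hρ0]
    congr 1
    field_simp
    ring
  rw [e] at h
  have h2 := mul_le_mul_of_nonneg_left h hα.le
  have e2 : α * (1/α * ρ + (1 - 1/α) * (ρ * ρ ^ α)) = ρ + (α - 1) * (ρ * ρ ^ α) := by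
    field_simp
  linarith [h2, e2.le]

lemma stmt3_theta_nonneg (hρ : 1 < ρ) (hα : 0 < α) (hα1 : α ≠ 1) (ha : 0 < ρ ^ α - 1) :
    0 ≤ (α * (ρ - 1) - (ρ ^ α - 1)) / ((1 - α) * ((ρ ^ α - 1) * (ρ - 1))) := by
  have hb : (0:ℝ) < ρ - 1 := by linarith
  rcases lt_or_gt_of_ne hα1 with h1 | h1
  · apply div_nonneg
    · have := stmt3_amgm_sub1 hρ hα h1; nlinarith
    · have : (0:ℝ) < 1 - α := by linarith
      positivity
  · rw [div_nonneg_iff]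
    right
    constructor
    · have := stmt3_amgm_sub2 hρ h1; nlinarith
    · have h2 : (1:ℝ) - α < 0 := by linarith
      nlinarith [mul_pos ha hb]

lemma stmt3_theta_le_one (hρ : 1 < ρ) (hα : 0 < α) (hα1 : α ≠ 1) (ha : 0 < ρ ^ α - 1) :
    (α * (ρ - 1) - (ρ ^ α - 1)) / ((1 - α) * ((ρ ^ α - 1) * (ρ - 1))) ≤ 1 := by
  have hb : (0:ℝ) < ρ - 1 := by linarith
  rcases lt_or_gt_of_ne hα1 with h1 | h1
  · have hden : (0:ℝ) < (1 - α) * ((ρ ^ α - 1) * (ρ - 1)) := by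
      have : (0:ℝ) < 1 - α := by linarith
      positivity
    rw [div_le_one hden]
    have := stmt3_amgm_psi1 hρ hα h1
    nlinarith
  · have hden : (1 - α) * ((ρ ^ α - 1) * (ρ - 1)) < 0 := by
      have h2 : (1:ℝ) - α < 0 := by linarith
      nlinarith [mul_pos ha hb]
    have hnum : (1 - α) * ((ρ ^ α - 1) * (ρ - 1)) ≤ α * (ρ - 1) - (ρ ^ α - 1) := by
      have := stmt3_amgm_psi2 hρ h1
      nlinarith
    calc (α * (ρ - 1) - (ρ ^ α - 1)) / ((1 - α) * ((ρ ^ α - 1) * (ρ - 1)))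
        ≤ ((1 - α) * ((ρ ^ α - 1) * (ρ - 1))) / ((1 - α) * ((ρ ^ α - 1) * (ρ - 1))) :=
          div_le_div_of_nonpos_of_le hden.le hnum
      _ = 1 := div_self hden.ne

lemma stmt3_gfun_hasDeriv (hα1 : α ≠ 1) (ha : 0 < a) (hb : 0 < b)
    (hθ : θ = (α * b - a) / ((1 - α) * (a * b))) (t : ℝ) (ht : 0 ≤ t) :
    HasDerivAt (gfun α a b) (a * b * (θ - t) / ((1 + a * t) * (1 + b * t))) t := by
  have h1 : 0 < 1 + a * t := by nlinarith
  have h2 : 0 < 1 + b * t := by nlinarith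
  have hα' : α - 1 ≠ 0 := sub_ne_zero.mpr hα1
  have hα'' : 1 - α ≠ 0 := sub_ne_zero.mpr (Ne.symm hα1)
  have d1 : HasDerivAt (fun x => 1 + a * x) a t := by
    simpa using ((hasDerivAt_id t).const_mul a).const_add 1
  have d2 : HasDerivAt (fun x => 1 + b * x) b t := by
    simpa using ((hasDerivAt_id t).const_mul b).const_add 1
  have l1 : HasDerivAt (fun x => Real.log (1 + a * x)) (a / (1 + a * t)) t := d1.log h1.ne'
  have l2 : HasDerivAt (fun x => Real.log (1 + b * x)) (b / (1 + b * t)) t := d2.log h2.ne'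
  have h := (l1.const_mul ((α - 1)⁻¹)).sub (l2.const_mul (α / (α - 1)))
  refine HasDerivAt.congr_deriv (f := gfun α a b) h ?_
  subst hθ
  field_simp
  ring

lemma stmt3_gfun_le_max (hα1 : α ≠ 1) (ha : 0 < a) (hb : 0 < b)
    (hθ : θ = (α * b - a) / ((1 - α) * (a * b))) (hθ0 : 0 ≤ θ) (hθ1 : θ ≤ 1)
    (ht0 : 0 ≤ t) (ht1 : t ≤ 1) : gfun α a b t ≤ gfun α a b θ := by
  have hD : ∀ x : ℝ, 0 ≤ x → HasDerivAt (gfun α a b)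
      (a * b * (θ - x) / ((1 + a * x) * (1 + b * x))) x :=
    fun x hx => stmt3_gfun_hasDeriv hα1 ha hb hθ x hx
  have hmono : MonotoneOn (gfun α a b) (Set.Icc 0 θ) := by
    apply monotoneOn_of_deriv_nonneg (convex_Icc _ _)
    · exact fun x hx => (hD x hx.1).continuousAt.continuousWithinAt
    · intro x hx
      rw [interior_Icc] at hx
      exact (hD x hx.1.le).differentiableAt.differentiableWithinAt
    · intro x hx
      rw [interior_Icc] at hx
      rw [(hD x hx.1.le).deriv]
      have h1 : 0 < 1 + a * x := by nlinarith [hx.1]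
      have h2 : 0 < 1 + b * x := by nlinarith [hx.1]
      have : 0 ≤ θ - x := by linarith [hx.2]
      positivity
  have hanti : AntitoneOn (gfun α a b) (Set.Icc θ 1) := by
    apply antitoneOn_of_deriv_nonpos (convex_Icc _ _)
    · exact fun x hx => (hD x (le_trans hθ0 hx.1)).continuousAt.continuousWithinAt
    · intro x hx
      rw [interior_Icc] at hx
      exact (hD x (le_trans hθ0 hx.1.le)).differentiableAt.differentiableWithinAt
    · intro x hx
      rw [interior_Icc] at hx
      have hx0 : 0 ≤ x := le_trans hθ0 hx.1.le
      rw [(hD x hx0).deriv]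
      have h1 : 0 < 1 + a * x := by nlinarith
      have h2 : 0 < 1 + b * x := by nlinarith
      apply div_nonpos_of_nonpos_of_nonneg
      · have : θ - x ≤ 0 := by linarith [hx.1]
        nlinarith [mul_pos ha hb]
      · positivity
  rcases le_total t θ with h | h
  · exact hmono ⟨ht0, h⟩ ⟨hθ0, le_refl _⟩ h
  · exact hanti ⟨le_refl _, hθ1⟩ ⟨h, ht1⟩ h

lemma stmt3_logcalc (hα1 : α ≠ 1) (ha : 0 < a) (hb : 0 < b) {n : ℕ} (hn : 1 ≤ n)
    {T : ℝ} (hT : 0 ≤ T) :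
    (1 - α)⁻¹ * (Real.log ((n : ℝ) + a * T) - α * Real.log ((n : ℝ) + b * T)) =
      Real.log n - gfun α a b (T / n) := by
  have hn0 : (0:ℝ) < n := by exact_mod_cast Nat.pos_of_ne_zero (by omega)
  have h1 : (0:ℝ) < (n:ℝ) + a * T := by nlinarith
  have h2 : (0:ℝ) < (n:ℝ) + b * T := by nlinarith
  have e1 : 1 + a * (T / n) = ((n:ℝ) + a * T) / n := by field_simp
  have e2 : 1 + b * (T / n) = ((n:ℝ) + b * T) / n := by field_simp
  have hα' : α - 1 ≠ 0 := sub_ne_zero.mpr hα1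
  have hα'' : (1:ℝ) - α ≠ 0 := sub_ne_zero.mpr (Ne.symm hα1)
  unfold gfun
  rw [e1, e2, Real.log_div h1.ne' hn0.ne', Real.log_div h2.ne' hn0.ne']
  field_simp
  ring

lemma stmt3_sum_ite_Icc (n i : ℕ) (hin : i ≤ n) (c d : ℝ) :
    ∑ j ∈ Finset.Icc 1 n, (if j ≤ i then c else d) = (i : ℝ) * c + ((n : ℝ) - (i : ℝ)) * d := by
  rw [Finset.sum_ite]
  have h1 : (Finset.Icc 1 n).filter (fun j => j ≤ i) = Finset.Icc 1 i := by
    ext j; simp only [Finset.mem_filter, Finset.mem_Icc]; omega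
  have h2 : (Finset.Icc 1 n).filter (fun j => ¬ j ≤ i) = Finset.Icc (i+1) n := by
    ext j; simp only [Finset.mem_filter, Finset.mem_Icc]; omega
  rw [h1, h2, Finset.sum_const, Finset.sum_const, Nat.card_Icc, Nat.card_Icc]
  have e : n + 1 - (i + 1) = n - i := by omega
  rw [e]
  simp only [Nat.add_sub_cancel, nsmul_eq_mul]
  rw [Nat.cast_sub hin]

set_option maxHeartbeats 1000000 in
lemma stmt3_chord_bound (hρ : 1 < ρ) (hα : 0 < α) (hα1 : α ≠ 1)
    (hθ : θ = (α * (ρ-1) - (ρ^α-1)) / ((1 - α) * ((ρ^α-1) * (ρ-1))))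
    (hθ0 : 0 ≤ θ) (hθ1 : θ ≤ 1)
    {n : ℕ} (hn : 1 ≤ n) {P : ℕ → ℝ} (hP : IsPMF n P) (hR : RatioBdd n ρ P) :
    Real.log n - gfun α (ρ^α-1) (ρ-1) θ ≤ renyiH n α P := by
  obtain ⟨hpos, hsum⟩ := hP
  have hρ0 : (0:ℝ) < ρ := by linarith
  have hb : (0:ℝ) < ρ - 1 := by linarith
  have ha : (0:ℝ) < ρ ^ α - 1 := by
    have : (1:ℝ) < ρ ^ α := (Real.one_lt_rpow_iff_of_pos hρ0).mpr (Or.inl ⟨hρ, hα⟩)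
    linarith
  have hn0 : (0:ℝ) < n := by exact_mod_cast Nat.pos_of_ne_zero (by omega)
  set s := Finset.Icc 1 n with hs_def
  have hsne : s.Nonempty := ⟨1, by simp [hs_def]; omega⟩
  set m := s.inf' hsne P with hm_def
  have hmle : ∀ i ∈ s, m ≤ P i := fun i hi => Finset.inf'_le P hi
  obtain ⟨j0, hj0, hj0e⟩ := Finset.exists_mem_eq_inf' hsne P
  have hm0 : 0 < m := by rw [hm_def, hj0e]; exact hpos j0 hj0
  have hup : ∀ i ∈ s, P i ≤ ρ * m := fun i hi => by
    rw [hm_def, hj0e]; exact hR i hi j0 hj0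
  set T := ∑ i ∈ s, (P i - m) / ((ρ-1) * m) with hT_def
  have hbm : 0 < (ρ-1) * m := mul_pos hb hm0
  have hT0 : 0 ≤ T := Finset.sum_nonneg fun i hi => div_nonneg (by linarith [hmle i hi]) hbm.le
  have hcard : s.card = n := by simp [hs_def]
  have hTn : T ≤ n := by
    calc T ≤ ∑ _i ∈ s, (1:ℝ) := Finset.sum_le_sum (fun i hi => by
            rw [div_le_one hbm]; have := hup i hi; nlinarith)
      _ = (n:ℝ) := by rw [Finset.sum_const, hcard, nsmul_eq_mul, mul_one]
  have hsum_sub : ∑ i ∈ s, (P i - m) = 1 - (n:ℝ) * m := by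
    rw [Finset.sum_sub_distrib, hsum, Finset.sum_const, hcard, nsmul_eq_mul]
  have hmT : m * ((n:ℝ) + (ρ-1) * T) = 1 := by
    have key : (ρ-1) * m * T = 1 - (n:ℝ) * m := by
      rw [hT_def, Finset.mul_sum, ← hsum_sub]
      exact Finset.sum_congr rfl fun i hi => mul_div_cancel₀ _ hbm.ne'
    linear_combination key
  have hnb : (0:ℝ) < (n:ℝ) + (ρ-1) * T := by nlinarith
  have hna : (0:ℝ) < (n:ℝ) + (ρ^α-1) * T := by nlinarith
  set S := ∑ i ∈ s, P i ^ α with hS_def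
  have hS0 : 0 < S := Finset.sum_pos (fun i hi => Real.rpow_pos_of_pos (hpos i hi) α) hsne
  set V := m ^ α * ((n:ℝ) + (ρ^α-1) * T) with hV_def
  have hV0 : 0 < V := by
    have := Real.rpow_pos_of_pos hm0 α
    positivity
  have hminv : m = ((n:ℝ) + (ρ-1) * T)⁻¹ := eq_inv_of_mul_eq_one_left hmT
  have hlogV : (1-α)⁻¹ * Real.log V = Real.log n - gfun α (ρ^α-1) (ρ-1) (T / n) := by
    rw [hV_def, Real.log_mul (by positivity : m ^ α ≠ 0) hna.ne', Real.log_rpow hm0,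
      hminv, Real.log_inv]
    rw [← stmt3_logcalc hα1 ha hb hn hT0]
    ring
  have hgle : gfun α (ρ^α-1) (ρ-1) (T / n) ≤ gfun α (ρ^α-1) (ρ-1) θ :=
    stmt3_gfun_le_max hα1 ha hb hθ hθ0 hθ1 (by positivity) ((div_le_one hn0).mpr hTn)
  have hren : renyiH n α P = (1-α)⁻¹ * Real.log S := by rw [renyiH, if_neg hα1]
  have hrep : ∀ i ∈ s, (1 - (P i - m)/((ρ-1)*m)) * m + ((P i - m)/((ρ-1)*m)) * (ρ * m) = P i :=
    fun i hi => by field_simp; ring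
  have ht01 : ∀ i ∈ s, 0 ≤ (P i - m)/((ρ-1)*m) ∧ (P i - m)/((ρ-1)*m) ≤ 1 := fun i hi =>
    ⟨div_nonneg (by linarith [hmle i hi]) hbm.le,
     by rw [div_le_one hbm]; have := hup i hi; nlinarith⟩
  have hsum_V : ∑ i ∈ s, m ^ α * (1 + (ρ^α-1) * ((P i - m)/((ρ-1)*m))) = V := by
    rw [← Finset.mul_sum, hV_def]
    congr 1
    rw [Finset.sum_add_distrib, Finset.sum_const, hcard, nsmul_eq_mul, mul_one,
      ← Finset.mul_sum, ← hT_def]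
  have hmulrpow : (ρ * m) ^ α = ρ ^ α * m ^ α := Real.mul_rpow hρ0.le hm0.le
  rcases lt_or_gt_of_ne hα1 with hc | hc
  · have hVS : V ≤ S := by
      rw [← hsum_V]
      apply Finset.sum_le_sum
      intro i hi
      obtain ⟨ht0', ht1'⟩ := ht01 i hi
      have hcc := (Real.strictConcaveOn_rpow hα hc).concaveOn
      have h := hcc.2 (Set.mem_Ici.mpr hm0.le) (Set.mem_Ici.mpr (by positivity : (0:ℝ) ≤ ρ * m))
        (by linarith : 0 ≤ 1 - (P i - m)/((ρ-1)*m)) ht0' (by ring)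
      simp only [smul_eq_mul] at h
      rw [hrep i hi] at h
      rw [hmulrpow] at h
      calc m ^ α * (1 + (ρ^α-1) * ((P i - m)/((ρ-1)*m)))
          = (1 - (P i - m)/((ρ-1)*m)) * m ^ α
            + ((P i - m)/((ρ-1)*m)) * (ρ^α * m^α) := by ring
        _ ≤ P i ^ α := h
    rw [hren]
    have h1α : (0:ℝ) < (1-α)⁻¹ := by
      have : (0:ℝ) < 1 - α := by linarith
      positivity
    calc Real.log n - gfun α (ρ^α-1) (ρ-1) θ
        ≤ Real.log n - gfun α (ρ^α-1) (ρ-1) (T / n) := by linarith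
      _ = (1-α)⁻¹ * Real.log V := hlogV.symm
      _ ≤ (1-α)⁻¹ * Real.log S :=
          mul_le_mul_of_nonneg_left (Real.log_le_log hV0 hVS) h1α.le
  · have hSV : S ≤ V := by
      rw [← hsum_V]
      apply Finset.sum_le_sum
      intro i hi
      obtain ⟨ht0', ht1'⟩ := ht01 i hi
      have hcx := convexOn_rpow hc.le
      have h := hcx.2 (Set.mem_Ici.mpr hm0.le) (Set.mem_Ici.mpr (by positivity : (0:ℝ) ≤ ρ * m))
        (by linarith : 0 ≤ 1 - (P i - m)/((ρ-1)*m)) ht0' (by ring)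
      simp only [smul_eq_mul] at h
      rw [hrep i hi] at h
      rw [hmulrpow] at h
      calc P i ^ α
          ≤ (1 - (P i - m)/((ρ-1)*m)) * m ^ α
            + ((P i - m)/((ρ-1)*m)) * (ρ^α * m^α) := h
        _ = m ^ α * (1 + (ρ^α-1) * ((P i - m)/((ρ-1)*m))) := by ring
    rw [hren]
    have h1α : (1-α)⁻¹ < 0 := by
      apply inv_lt_zero.mpr; linarith
    calc Real.log n - gfun α (ρ^α-1) (ρ-1) θ
        ≤ Real.log n - gfun α (ρ^α-1) (ρ-1) (T / n) := by linarith
      _ = (1-α)⁻¹ * Real.log V := hlogV.symm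
      _ ≤ (1-α)⁻¹ * Real.log S :=
          mul_le_mul_of_nonpos_left (Real.log_le_log hS0 hSV) h1α.le

lemma stmt3_Qlemma (hρ : 1 < ρ) (hα : 0 < α) (hα1 : α ≠ 1) {n i : ℕ}
    (hn : 1 ≤ n) (hin : i ≤ n) :
    ∃ Q : ℕ → ℝ, IsPMF n Q ∧ RatioBdd n ρ Q ∧
      renyiH n α Q = Real.log n - gfun α (ρ^α-1) (ρ-1) ((i:ℝ)/n) := by
  have hρ0 : (0:ℝ) < ρ := by linarith
  have hb : (0:ℝ) < ρ - 1 := by linarith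
  have ha : (0:ℝ) < ρ ^ α - 1 := by
    have : (1:ℝ) < ρ ^ α := (Real.one_lt_rpow_iff_of_pos hρ0).mpr (Or.inl ⟨hρ, hα⟩)
    linarith
  have hn0 : (0:ℝ) < n := by exact_mod_cast Nat.pos_of_ne_zero (by omega)
  have hi0 : (0:ℝ) ≤ i := Nat.cast_nonneg i
  have hX : (0:ℝ) < (n:ℝ) + (i:ℝ) * (ρ-1) := by nlinarith
  set β : ℝ := ((n:ℝ) + (i:ℝ) * (ρ-1))⁻¹ with hβ_def
  have hβ : 0 < β := by positivity
  refine ⟨fun j => if j ≤ i then ρ * β else β, ⟨?_, ?_⟩, ?_, ?_⟩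
  · intro j hj; dsimp only; split <;> positivity
  · rw [stmt3_sum_ite_Icc n i hin]
    have e : (i:ℝ) * (ρ * β) + ((n:ℝ) - (i:ℝ)) * β = ((n:ℝ) + (i:ℝ) * (ρ-1)) * β := by ring
    rw [e, hβ_def, mul_inv_cancel₀ hX.ne']
  · intro x _ y _
    dsimp only
    have h1 : (if x ≤ i then ρ * β else β) ≤ ρ * β := by
      split
      · exact le_refl _
      · nlinarith
    have h2 : β ≤ (if y ≤ i then ρ * β else β) := by
      split
      · nlinarith
      · exact le_refl _
    calc (if x ≤ i then ρ * β else β) ≤ ρ * β := h1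
      _ ≤ ρ * (if y ≤ i then ρ * β else β) := mul_le_mul_of_nonneg_left h2 hρ0.le
  · rw [renyiH, if_neg hα1]
    have e0 : ∀ j ∈ Finset.Icc 1 n, (if j ≤ i then ρ * β else β) ^ α
        = (if j ≤ i then (ρ * β) ^ α else β ^ α) := by
      intro j _; exact apply_ite (· ^ α) _ _ _
    rw [Finset.sum_congr rfl e0, stmt3_sum_ite_Icc n i hin]
    have hmul : (ρ * β) ^ α = ρ ^ α * β ^ α := Real.mul_rpow hρ0.le hβ.le
    have e1 : (i:ℝ) * (ρ ^ α * β ^ α) + ((n:ℝ) - (i:ℝ)) * β ^ α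
        = β ^ α * ((n:ℝ) + (ρ^α-1) * (i:ℝ)) := by ring
    have hXa : (0:ℝ) < (n:ℝ) + (ρ^α-1) * (i:ℝ) := by nlinarith
    rw [hmul, e1, Real.log_mul (by positivity) hXa.ne', Real.log_rpow hβ,
      hβ_def, Real.log_inv]
    rw [← stmt3_logcalc hα1 ha hb hn hi0]
    have e2 : (n:ℝ) + (i:ℝ) * (ρ - 1) = (n:ℝ) + (ρ-1) * (i:ℝ) := by ring
    rw [e2]
    ring

end Stmt3Aux

theorem stmt3 (ρ α : ℝ) (hρ : 1 < ρ) (hα : 0 < α) (hα1 : α ≠ 1) :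
    Filter.Tendsto (fun n : ℕ => cN α ρ n) Filter.atTop (nhds (cInfinity α ρ)) := by
  have hρ0 : (0:ℝ) < ρ := by linarith
  have hb : (0:ℝ) < ρ - 1 := by linarith
  have ha : (0:ℝ) < ρ ^ α - 1 := by
    have : (1:ℝ) < ρ ^ α := (Real.one_lt_rpow_iff_of_pos hρ0).mpr (Or.inl ⟨hρ, hα⟩)
    linarith
  have hα' : α - 1 ≠ 0 := sub_ne_zero.mpr hα1
  have hα'' : (1:ℝ) - α ≠ 0 := sub_ne_zero.mpr (Ne.symm hα1)
  set θ : ℝ := (α * (ρ-1) - (ρ^α-1)) / ((1 - α) * ((ρ^α-1) * (ρ-1))) with hθ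
  have hθ0 : 0 ≤ θ := stmt3_theta_nonneg hρ hα hα1 ha
  have hθ1 : θ ≤ 1 := stmt3_theta_le_one hρ hα hα1 ha
  have hci : cInfinity α ρ = gfun α (ρ^α-1) (ρ-1) θ := by
    unfold cInfinity gfun
    rw [hθ]
    have e1 : 1 + (ρ^α-1) * ((α * (ρ-1) - (ρ^α-1)) / ((1 - α) * ((ρ^α-1) * (ρ-1))))
        = 1 + (1 + α * (ρ - 1) - ρ ^ α) / ((1 - α) * (ρ - 1)) := by
      field_simp
      ring
    have e2 : 1 + (ρ-1) * ((α * (ρ-1) - (ρ^α-1)) / ((1 - α) * ((ρ^α-1) * (ρ-1))))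
        = 1 + (1 + α * (ρ - 1) - ρ ^ α) / ((1 - α) * (ρ ^ α - 1)) := by
      field_simp
      ring
    rw [e1, e2]
  have key : ∀ n : ℕ, 2 ≤ n →
      gfun α (ρ^α-1) (ρ-1) ((⌊θ * n⌋₊ : ℝ)/n) ≤ cN α ρ n ∧
        cN α ρ n ≤ gfun α (ρ^α-1) (ρ-1) θ := by
    intro n hn2
    have hn1 : 1 ≤ n := by omega
    have hn0 : (0:ℝ) < n := by exact_mod_cast Nat.pos_of_ne_zero (by omega)
    have hir : ((⌊θ * n⌋₊ : ℕ) : ℝ) ≤ θ * n := Nat.floor_le (by positivity)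
    have hin : ⌊θ * n⌋₊ ≤ n := by
      have h2 : θ * n ≤ n := by nlinarith
      have h3 : ((⌊θ * n⌋₊ : ℕ) : ℝ) ≤ (n : ℝ) := le_trans hir h2
      exact_mod_cast h3
    obtain ⟨Q, hQ1, hQ2, hQ3⟩ := stmt3_Qlemma hρ hα hα1 hn1 hin
    have hmem : renyiH n α Q ∈ renyiH n α '' {P | IsPMF n P ∧ RatioBdd n ρ P} :=
      ⟨Q, ⟨hQ1, hQ2⟩, rfl⟩
    have hlbset : ∀ x ∈ renyiH n α '' {P | IsPMF n P ∧ RatioBdd n ρ P},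
        Real.log n - gfun α (ρ^α-1) (ρ-1) θ ≤ x := by
      rintro x ⟨P, ⟨h1, h2⟩, rfl⟩
      exact stmt3_chord_bound hρ hα hα1 hθ hθ0 hθ1 hn1 h1 h2
    have hbdd : BddBelow (renyiH n α '' {P | IsPMF n P ∧ RatioBdd n ρ P}) :=
      ⟨Real.log n - gfun α (ρ^α-1) (ρ-1) θ, fun x hx => hlbset x hx⟩
    have hInf_le : sInf (renyiH n α '' {P | IsPMF n P ∧ RatioBdd n ρ P}) ≤ renyiH n α Q :=
      csInf_le hbdd hmem
    have hle_Inf : Real.log n - gfun α (ρ^α-1) (ρ-1) θ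
        ≤ sInf (renyiH n α '' {P | IsPMF n P ∧ RatioBdd n ρ P}) :=
      le_csInf ⟨_, hmem⟩ hlbset
    have hcN : cN α ρ n
        = Real.log n - sInf (renyiH n α '' {P | IsPMF n P ∧ RatioBdd n ρ P}) := by
      rw [cN, if_neg (by omega)]
    constructor
    · rw [hcN]; rw [hQ3] at hInf_le; linarith
    · rw [hcN]; linarith
  have hfl : Filter.Tendsto (fun n : ℕ => (⌊θ * n⌋₊ : ℝ)/(n : ℝ))
      Filter.atTop (nhds θ) := by
    refine tendsto_of_tendsto_of_tendsto_of_le_of_le'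
      (g := fun n : ℕ => θ - 1/(n:ℝ)) (h := fun _ : ℕ => θ) ?_ tendsto_const_nhds ?_ ?_
    · have h0 : Filter.Tendsto (fun _ : ℕ => θ) Filter.atTop (nhds θ) := tendsto_const_nhds
      simpa using h0.sub tendsto_one_div_atTop_nhds_zero_nat
    · filter_upwards [Filter.eventually_ge_atTop 1] with n hn
      have hn0 : (0:ℝ) < n := by exact_mod_cast Nat.pos_of_ne_zero (by omega)
      rw [le_div_iff₀ hn0]
      have h := Nat.lt_floor_add_one (θ * n)
      have e : (θ - 1/n) * n = θ * n - 1 := by field_simp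
      rw [e]
      linarith
    · filter_upwards [Filter.eventually_ge_atTop 1] with n hn
      have hn0 : (0:ℝ) < n := by exact_mod_cast Nat.pos_of_ne_zero (by omega)
      rw [div_le_iff₀ hn0]
      exact Nat.floor_le (by positivity)
  have hgc : ContinuousAt (gfun α (ρ^α-1) (ρ-1)) θ := by
    have h1 : (0:ℝ) < 1 + (ρ^α-1) * θ := by nlinarith
    have h2 : (0:ℝ) < 1 + (ρ-1) * θ := by nlinarith
    unfold gfun
    apply ContinuousAt.sub
    · apply ContinuousAt.mul continuousAt_const
      exact ContinuousAt.comp (g := Real.log) (f := fun x : ℝ => 1 + (ρ^α-1)*x) (x := θ)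
        (Real.continuousAt_log h1.ne') (by fun_prop)
    · apply ContinuousAt.mul continuousAt_const
      exact ContinuousAt.comp (g := Real.log) (f := fun x : ℝ => 1 + (ρ-1)*x) (x := θ)
        (Real.continuousAt_log h2.ne') (by fun_prop)
  have hL : Filter.Tendsto (fun n : ℕ => gfun α (ρ^α-1) (ρ-1) ((⌊θ * n⌋₊ : ℝ)/n))
      Filter.atTop (nhds (gfun α (ρ^α-1) (ρ-1) θ)) := hgc.tendsto.comp hfl
  rw [hci]
  refine tendsto_of_tendsto_of_tendsto_of_le_of_le' hL tendsto_const_nhds ?_ ?_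
  · filter_upwards [Filter.eventually_ge_atTop 2] with n hn
    exact (key n hn).1
  · filter_upwards [Filter.eventually_ge_atTop 2] with n hn
    exact (key n hn).2
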